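/- Let C, D be invertible m×m matrices and (A_k), (B_k) matrix sequences. If (P_k, Q_k) are the numerator/denominator sequences of [A_0; B_k/A_k]_{k=1}^n, then C · (Q_n^{-1}P_n) · D equals the n-th convergent of the matrix continued fraction [C A_0 D; (B_1 D)/(A_1 C^{-1}), (B_2 C^{-1})/A_2, B_3/A_3, ..., B_n/A_n], whenever the relevant denominators are invertible. -/
import Mathlib


/-- Proposition 2.2 (i): for invertible `C` and `D`,
`C · (Qₙ⁻¹ Pₙ) · D` is the `n`-th convergent of the matrix continued fraction
`[C A₀ D; (B₁ D)/(A₁ C⁻¹), (B₂ C⁻¹)/A₂, B₃/A₃, …, Bₙ/Aₙ]`.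
Indices are shifted by one, so `P 0 = P_{-1} = I`, `P (k+1) = P_k`, etc. -/
theorem matrix_cf_left_right_multiply {m : ℕ}
    (C D : Matrix (Fin m) (Fin m) ℝ) (hC : IsUnit C) (hD : IsUnit D)
    (A B A' B' P Q P' Q' : ℕ → Matrix (Fin m) (Fin m) ℝ) (n : ℕ)
    (hA'0 : A' 0 = C * A 0 * D)
    (hA'1 : A' 1 = A 1 * C⁻¹) (hB'1 : B' 1 = B 1 * D)
    (hB'2 : B' 2 = B 2 * C⁻¹)
    (hA' : ∀ k, 2 ≤ k → A' k = A k) (hB' : ∀ k, 3 ≤ k → B' k = B k)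
    (hP0 : P 0 = 1) (hP1 : P 1 = A 0)
    (hQ0 : Q 0 = 0) (hQ1 : Q 1 = 1)
    (hP : ∀ k, 1 ≤ k → P (k + 1) = A k * P k + B k * P (k - 1))
    (hQ : ∀ k, 1 ≤ k → Q (k + 1) = A k * Q k + B k * Q (k - 1))
    (hP'0 : P' 0 = 1) (hP'1 : P' 1 = A' 0)
    (hQ'0 : Q' 0 = 0) (hQ'1 : Q' 1 = 1)
    (hP' : ∀ k, 1 ≤ k → P' (k + 1) = A' k * P' k + B' k * P' (k - 1))
    (hQ' : ∀ k, 1 ≤ k → Q' (k + 1) = A' k * Q' k + B' k * Q' (k - 1))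
    (hQn : IsUnit (Q (n + 1))) (hQ'n : IsUnit (Q' (n + 1))) :
    C * ((Q (n + 1))⁻¹ * P (n + 1)) * D = (Q' (n + 1))⁻¹ * P' (n + 1) := by
  have hCdet : IsUnit C.det := (Matrix.isUnit_iff_isUnit_det C).mp hC
  have hCC : C⁻¹ * C = 1 := Matrix.nonsing_inv_mul C hCdet
  -- key invariant for indices ≥ 2
  have key : ∀ k, (P' (k + 2) = P (k + 2) * D ∧ Q' (k + 2) = Q (k + 2) * C⁻¹)
      ∧ (P' (k + 3) = P (k + 3) * D ∧ Q' (k + 3) = Q (k + 3) * C⁻¹) := by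
    intro k
    induction k with
    | zero =>
      have h2P : P' 2 = P 2 * D := by
        have := hP' 1 le_rfl
        have h := hP 1 le_rfl
        simp only [hA'1, hB'1, hP'1, hA'0, hP'0] at this
        rw [this, h, hP1, hP0]
        rw [show A 1 * C⁻¹ * (C * A 0 * D) = A 1 * (C⁻¹ * C) * (A 0 * D) by
          noncomm_ring, hCC]
        noncomm_ring
      have h2Q : Q' 2 = Q 2 * C⁻¹ := by
        have := hQ' 1 le_rfl
        have h := hQ 1 le_rfl
        simp only [hA'1, hB'1, hQ'1, hQ'0] at this
        rw [this, h, hQ1, hQ0]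
        noncomm_ring
      have h3P : P' 3 = P 3 * D := by
        have := hP' 2 one_le_two
        have h := hP 2 one_le_two
        simp only [hA' 2 le_rfl, hB'2] at this
        rw [this, h, h2P, hP'1, hA'0, hP1]
        rw [show B 2 * C⁻¹ * (C * A 0 * D) = B 2 * (C⁻¹ * C) * (A 0 * D) by
          noncomm_ring, hCC]
        noncomm_ring
      have h3Q : Q' 3 = Q 3 * C⁻¹ := by
        have := hQ' 2 one_le_two
        have h := hQ 2 one_le_two
        simp only [hA' 2 le_rfl, hB'2, hQ'1] at this
        rw [this, h, h2Q, hQ1]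
        noncomm_ring
      exact ⟨⟨h2P, h2Q⟩, h3P, h3Q⟩
    | succ j ih =>
      refine ⟨ih.2, ?_, ?_⟩
      · have := hP' (j + 3) (by omega)
        have h := hP (j + 3) (by omega)
        simp only [hA' (j+3) (by omega), hB' (j+3) (by omega),
          show j + 3 - 1 = j + 2 from rfl] at this h
        rw [this, h, ih.1.1, ih.2.1]
        noncomm_ring
      · have := hQ' (j + 3) (by omega)
        have h := hQ (j + 3) (by omega)
        simp only [hA' (j+3) (by omega), hB' (j+3) (by omega),
          show j + 3 - 1 = j + 2 from rfl] at this h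
        rw [this, h, ih.1.2, ih.2.2]
        noncomm_ring
  cases n with
  | zero =>
    rw [hQ1, hQ'1, hP'1, hA'0, inv_one, hP1]
    noncomm_ring
  | succ n =>
    obtain ⟨⟨hPn, hQn'⟩, _⟩ := key n
    rw [hPn, hQn', Matrix.mul_inv_rev,
      Matrix.nonsing_inv_nonsing_inv C hCdet]
    noncomm_ring
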